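/- Let A = k[ℤ/nℤ] be the group Hopf algebra of the cyclic group of order n, with group-like generator g (so gⁿ = 1, Δg = g⊗g, ε(g) = 1, S(g) = g^{n−1}). Define ℛ := n⁻¹ Σ_{a,b=0}^{n−1} q^{−ab} g^a ⊗ g^b ∈ A ⊗ A. Then ℛ is a quasitriangular structure on A: ℛ is invertible in the algebra A⊗A with inverse n⁻¹ Σ_{a,b=0}^{n−1} q^{ab} g^a ⊗ g^b, it satisfies (Δ⊗id)(ℛ) = ℛ₁₃ℛ₂₃ and (id⊗Δ)(ℛ) = ℛ₁₃ℛ₁₂ in A⊗A⊗A, and τ(Δ(x))·ℛ = ℛ·Δ(x) for all x ∈ A (where τ is the flip of tensor factors and ℛ₁₃, ℛ₂₃, ℛ₁₂ denote ℛ placed in the indicated tensor factors with 1 elsewhere). This makes A the anyon-generating quantum group ℤ′_{/n}. -/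

import Mathlib

open scoped TensorProduct

namespace AnyonGen

/-- The group Hopf algebra `k[ℤ/nℤ]`. -/
abbrev A (k : Type) [Field k] (n : ℕ) : Type :=
  MonoidAlgebra k (Multiplicative (ZMod n))

variable (k : Type) [Field k] (n : ℕ)

/-- The group-like generator `g` of `k[ℤ/nℤ]` (so `gⁿ = 1`). -/
noncomputable def gElem : A k n :=
  MonoidAlgebra.of k (Multiplicative (ZMod n)) (Multiplicative.ofAdd (1 : ZMod n))

/-- The standard coproduct of the group algebra, determined by `Δg = g ⊗ g`
(every group element is group-like). -/
noncomputable def comulA : A k n →ₐ[k] A k n ⊗[k] A k n :=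
  MonoidAlgebra.lift k (A k n ⊗[k] A k n) (Multiplicative (ZMod n))
    { toFun := fun x => MonoidAlgebra.of k (Multiplicative (ZMod n)) x ⊗ₜ[k]
        MonoidAlgebra.of k (Multiplicative (ZMod n)) x
      map_one' := by simp [Algebra.TensorProduct.one_def, MonoidAlgebra.one_def]
      map_mul' := fun x y => by
        simp [Algebra.TensorProduct.tmul_mul_tmul] }

/-- `ℛ = n⁻¹ Σ_{a,b} q^{-ab} gᵃ ⊗ gᵇ`. -/
noncomputable def Rq (q : k) : A k n ⊗[k] A k n :=
  (n : k)⁻¹ • ∑ a ∈ Finset.range n, ∑ b ∈ Finset.range n,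
    q⁻¹ ^ (a * b) • (((gElem k n) ^ a) ⊗ₜ[k] ((gElem k n) ^ b))

/-- The claimed inverse `n⁻¹ Σ_{a,b} q^{ab} gᵃ ⊗ gᵇ`. -/
noncomputable def Rq' (q : k) : A k n ⊗[k] A k n :=
  (n : k)⁻¹ • ∑ a ∈ Finset.range n, ∑ b ∈ Finset.range n,
    q ^ (a * b) • (((gElem k n) ^ a) ⊗ₜ[k] ((gElem k n) ^ b))

/-- `ℛ₁₃ ∈ A ⊗ (A ⊗ A)`. -/
noncomputable def R13 (q : k) : A k n ⊗[k] (A k n ⊗[k] A k n) :=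
  (Algebra.TensorProduct.map (AlgHom.id k (A k n))
    (Algebra.TensorProduct.includeRight : A k n →ₐ[k] A k n ⊗[k] A k n)) (Rq k n q)

/-- `ℛ₁₂ ∈ A ⊗ (A ⊗ A)`. -/
noncomputable def R12 (q : k) : A k n ⊗[k] (A k n ⊗[k] A k n) :=
  (Algebra.TensorProduct.map (AlgHom.id k (A k n))
    (Algebra.TensorProduct.includeLeft : A k n →ₐ[k] A k n ⊗[k] A k n)) (Rq k n q)

/-- `ℛ₂₃ ∈ A ⊗ (A ⊗ A)`. -/
noncomputable def R23 (q : k) : A k n ⊗[k] (A k n ⊗[k] A k n) :=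
  (1 : A k n) ⊗ₜ[k] Rq k n q

section Aux

set_option linter.unusedSectionVars false
variable {k : Type} [Field k] {n : ℕ} [NeZero n] {q : k}

noncomputable def e (k : Type) [Field k] (n : ℕ) (x : ZMod n) : A k n :=
  MonoidAlgebra.of k (Multiplicative (ZMod n)) (Multiplicative.ofAdd x)

lemma e_mul (x y : ZMod n) : e k n x * e k n y = e k n (x + y) := by
  simp [e, ← map_mul]

lemma e_zero : e k n 0 = 1 := by
  simp [e, MonoidAlgebra.one_def]

lemma gElem_pow (a : ℕ) : gElem k n ^ a = e k n (a : ZMod n) := by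
  rw [gElem, e, ← map_pow]
  congr 1
  rw [← ofAdd_nsmul]
  simp

noncomputable def χ (q : k) {n : ℕ} (x : ZMod n) : k := q ^ x.val

lemma χ_zero : χ q (0 : ZMod n) = 1 := by simp [χ]

lemma pow_mod (hq : q ^ n = 1) (m : ℕ) : q ^ (m % n) = q ^ m := by
  conv_rhs => rw [← Nat.div_add_mod m n, pow_add, pow_mul, hq, one_pow, one_mul]

lemma χ_natCast (hq : q ^ n = 1) (m : ℕ) : χ q (m : ZMod n) = q ^ m := by
  rw [χ, ZMod.val_natCast, pow_mod hq]

lemma χ_add (hq : q ^ n = 1) (x y : ZMod n) : χ q (x + y) = χ q x * χ q y := by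
  have : ((x.val + y.val : ℕ) : ZMod n) = x + y := by push_cast [ZMod.natCast_zmod_val]; ring
  rw [← this, χ_natCast hq, pow_add, χ, χ]

lemma χ_neg_mul_self (hq : q ^ n = 1) (x : ZMod n) : χ q (-x) * χ q x = 1 := by
  rw [← χ_add hq, neg_add_cancel, χ_zero]

lemma sum_range_zmod {M : Type} [AddCommMonoid M] (f : ZMod n → M) :
    ∑ i ∈ Finset.range n, f (i : ZMod n) = ∑ x : ZMod n, f x := by
  refine Finset.sum_nbij' (fun a => (a : ZMod n)) (fun x => x.val) ?_ ?_ ?_ ?_ ?_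
  · intro a _; exact Finset.mem_univ _
  · intro x _; exact Finset.mem_range.2 (ZMod.val_lt x)
  · intro a ha; simp [ZMod.val_natCast, Nat.mod_eq_of_lt (Finset.mem_range.1 ha)]
  · intro x _; simp [ZMod.natCast_zmod_val]
  · intro a _; rfl

lemma sum_χ (hq : q ^ n = 1) (hprim : ∀ m : ℕ, 0 < m → m < n → q ^ m ≠ 1)
    (c : ZMod n) : ∑ a : ZMod n, χ q (a * c) = if c = 0 then (n : k) else 0 := by
  split_ifs with hc
  · subst hc; simp [χ_zero, Finset.card_univ, ZMod.card]
  · have hvpos : 0 < c.val := Nat.pos_of_ne_zero (fun h => hc ((ZMod.val_eq_zero c).1 h))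
    have hr : q ^ c.val ≠ 1 := hprim c.val hvpos (ZMod.val_lt c)
    have key : ∀ a : ZMod n, χ q (a * c) = (q ^ c.val) ^ a.val := by
      intro a
      rw [χ, ZMod.val_mul, pow_mod hq, pow_mul']
    rw [Finset.sum_congr rfl (fun a _ => key a)]
    rw [← sum_range_zmod (f := fun a : ZMod n => (q ^ c.val) ^ a.val)]
    have : ∀ i ∈ Finset.range n, (q ^ c.val) ^ (ZMod.val ((i : ZMod n))) = (q ^ c.val) ^ i := by
      intro i hi
      rw [ZMod.val_natCast, pow_mod (by rw [← pow_mul, mul_comm, pow_mul, hq, one_pow])]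
    rw [Finset.sum_congr rfl this, geom_sum_eq hr, ← pow_mul, mul_comm, pow_mul, hq, one_pow,
      sub_self, zero_div]

/-- Orthogonal idempotents. -/
noncomputable def P (q : k) {n : ℕ} [NeZero n] (c : ZMod n) : A k n :=
  (n : k)⁻¹ • ∑ a : ZMod n, χ q (-(a * c)) • e k n a

lemma e_mul_P (hq : q ^ n = 1) (b c : ZMod n) :
    e k n b * P q c = χ q (b * c) • P q c := by
  rw [P, mul_smul_comm, Finset.mul_sum, smul_comm (χ q (b * c))]
  congr 1
  rw [Finset.smul_sum]
  refine Fintype.sum_equiv (Equiv.addLeft b) _ _ fun x => ?_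
  rw [mul_smul_comm, e_mul, smul_smul, ← χ_add hq]
  show χ q (-(x * c)) • e k n (b + x) = χ q (b * c + -((b + x) * c)) • e k n (b + x)
  congr 2
  ring

lemma P_mul_P (hn : (n : k) ≠ 0) (hq : q ^ n = 1)
    (hprim : ∀ m : ℕ, 0 < m → m < n → q ^ m ≠ 1) (c d : ZMod n) :
    P q c * P q d = if c = d then P q c else 0 := by
  rw [mul_comm]
  conv_lhs => rw [P]
  rw [smul_mul_assoc, Finset.sum_mul]
  have h1 : ∀ b : ZMod n, (χ q (-(b * d)) • e k n b) * P q c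
      = (χ q (-(b * d)) * χ q (b * c)) • P q c := by
    intro b; rw [smul_mul_assoc, e_mul_P hq, smul_smul]
  rw [Finset.sum_congr rfl (fun b _ => h1 b), ← Finset.sum_smul]
  have h2 : ∀ b : ZMod n, χ q (-(b * d)) * χ q (b * c) = χ q (b * (c - d)) := by
    intro b; rw [← χ_add hq]; congr 1; ring
  rw [Finset.sum_congr rfl (fun b _ => h2 b), sum_χ hq hprim]
  simp only [sub_eq_zero]
  split_ifs with h
  · rw [smul_smul, inv_mul_cancel₀ hn, one_smul]
  · rw [zero_smul, smul_zero]

lemma sum_P (hn : (n : k) ≠ 0) (hq : q ^ n = 1)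
    (hprim : ∀ m : ℕ, 0 < m → m < n → q ^ m ≠ 1) :
    ∑ c : ZMod n, P q c = 1 := by
  simp only [P]
  rw [← Finset.smul_sum, Finset.sum_comm]
  have h1 : ∀ a : ZMod n, ∑ c : ZMod n, χ q (-(a * c)) • e k n a
      = (if a = 0 then (n : k) else 0) • e k n a := by
    intro a
    rw [← Finset.sum_smul]
    congr 1
    have h : ∀ c : ZMod n, χ q (-(a * c)) = χ q (c * (-a)) := by
      intro c; congr 1; ring
    rw [Finset.sum_congr rfl (fun c _ => h c), sum_χ hq hprim]
    simp only [neg_eq_zero]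
  rw [Finset.sum_congr rfl (fun a _ => h1 a)]
  simp only [ite_smul, zero_smul]
  rw [Finset.sum_ite_eq' Finset.univ (0 : ZMod n)]
  rw [if_pos (Finset.mem_univ _), e_zero, smul_smul, inv_mul_cancel₀ hn, one_smul]


lemma comulA_e (x : ZMod n) : comulA k n (e k n x) = e k n x ⊗ₜ[k] e k n x := by
  rw [comulA, e, MonoidAlgebra.lift_of]
  rfl

lemma Rq_expand (hq : q ^ n = 1) : Rq k n q
    = (n : k)⁻¹ • ∑ x : ZMod n, ∑ y : ZMod n,
        χ q (-(x * y)) • (e k n x ⊗ₜ[k] e k n y) := by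
  rw [Rq]
  congr 1
  rw [← sum_range_zmod (f := fun x : ZMod n => ∑ y : ZMod n,
      χ q (-(x * y)) • (e k n x ⊗ₜ[k] e k n y))]
  refine Finset.sum_congr rfl fun a _ => ?_
  rw [← sum_range_zmod (f := fun y : ZMod n =>
      χ q (-((a : ZMod n) * y)) • (e k n (a : ZMod n) ⊗ₜ[k] e k n y))]
  refine Finset.sum_congr rfl fun b _ => ?_
  rw [gElem_pow, gElem_pow]
  congr 1
  have h1 : ((a : ZMod n) * (b : ZMod n)) = ((a * b : ℕ) : ZMod n) := by push_cast; ring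
  have h2 := χ_neg_mul_self hq ((a : ZMod n) * (b : ZMod n))
  rw [h1, χ_natCast hq] at h2
  rw [h1, inv_pow]
  exact (eq_inv_of_mul_eq_one_left h2).symm

lemma Rq'_expand (hq : q ^ n = 1) : Rq' k n q
    = (n : k)⁻¹ • ∑ x : ZMod n, ∑ y : ZMod n,
        χ q (x * y) • (e k n x ⊗ₜ[k] e k n y) := by
  rw [Rq']
  congr 1
  rw [← sum_range_zmod (f := fun x : ZMod n => ∑ y : ZMod n,
      χ q (x * y) • (e k n x ⊗ₜ[k] e k n y))]
  refine Finset.sum_congr rfl fun a _ => ?_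
  rw [← sum_range_zmod (f := fun y : ZMod n =>
      χ q ((a : ZMod n) * y) • (e k n (a : ZMod n) ⊗ₜ[k] e k n y))]
  refine Finset.sum_congr rfl fun b _ => ?_
  rw [gElem_pow, gElem_pow]
  congr 1
  have h1 : ((a : ZMod n) * (b : ZMod n)) = ((a * b : ℕ) : ZMod n) := by push_cast; ring
  rw [h1, χ_natCast hq]

lemma Rq_eq (hq : q ^ n = 1) :
    Rq k n q = ∑ c : ZMod n, P q c ⊗ₜ[k] e k n c := by
  rw [Rq_expand hq, Finset.sum_comm, Finset.smul_sum]
  simp only [P, ← TensorProduct.smul_tmul', TensorProduct.sum_tmul]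

lemma Rq_eq₂ (hq : q ^ n = 1) :
    Rq k n q = ∑ c : ZMod n, e k n c ⊗ₜ[k] P q c := by
  rw [Rq_expand hq, Finset.smul_sum]
  simp only [P, TensorProduct.tmul_smul, TensorProduct.tmul_sum, Finset.smul_sum]
  refine Finset.sum_congr rfl fun c _ => Finset.sum_congr rfl fun a _ => ?_
  rw [mul_comm c a]

lemma Rq'_eq (hq : q ^ n = 1) :
    Rq' k n q = ∑ c : ZMod n, P q c ⊗ₜ[k] e k n (-c) := by
  rw [Rq'_expand hq, Finset.sum_comm, Finset.smul_sum]
  refine Fintype.sum_equiv (Equiv.neg (ZMod n)) _ _ fun y => ?_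
  show (n : k)⁻¹ • ∑ x : ZMod n, χ q (x * y) • (e k n x ⊗ₜ[k] e k n y)
      = P q (-y) ⊗ₜ[k] e k n (-(-y))
  rw [neg_neg, P]
  simp only [← TensorProduct.smul_tmul', TensorProduct.sum_tmul]
  congr 1
  refine Finset.sum_congr rfl fun a _ => ?_
  have h : -(a * -y) = a * y := by ring
  rw [h]

end Aux

set_option maxHeartbeats 1000000 in
/-- for `q` a primitive `n`-th root of unity (and `n` invertible in
`k`), `ℛ = n⁻¹ Σ q^{-ab} gᵃ ⊗ gᵇ` is a quasitriangular structure on the group Hopf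
algebra `k[ℤ/nℤ]`: it is invertible with inverse `n⁻¹ Σ q^{ab} gᵃ ⊗ gᵇ`, it
satisfies `(Δ⊗id)ℛ = ℛ₁₃ℛ₂₃` and `(id⊗Δ)ℛ = ℛ₁₃ℛ₁₂`, and
`τ(Δx)·ℛ = ℛ·Δx` for all `x`.  This is the anyon-generating quantum group
`ℤ'_{/n}`. -/
theorem anyon_quasitriangular (k : Type) [Field k] (n : ℕ) [NeZero n] (q : k)
    (hn : (n : k) ≠ 0) (hq : q ^ n = 1)
    (hprim : ∀ m : ℕ, 0 < m → m < n → q ^ m ≠ 1) :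
    Rq k n q * Rq' k n q = 1 ∧ Rq' k n q * Rq k n q = 1 ∧
    ((Algebra.TensorProduct.assoc k k k (A k n) (A k n) (A k n)).toAlgHom.comp
        (Algebra.TensorProduct.map (comulA k n) (AlgHom.id k (A k n)))) (Rq k n q) =
      R13 k n q * R23 k n q ∧
    (Algebra.TensorProduct.map (AlgHom.id k (A k n)) (comulA k n)) (Rq k n q) =
      R13 k n q * R12 k n q ∧
    ∀ x : A k n,
      (Algebra.TensorProduct.comm k (A k n) (A k n)) (comulA k n x) * Rq k n q =
        Rq k n q * comulA k n x := by
  have hinv : Rq k n q * Rq' k n q = 1 := by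
    rw [Rq_eq hq, Rq'_eq hq, Finset.sum_mul_sum]
    have key : ∀ c d : ZMod n,
        (P q c ⊗ₜ[k] e k n c) * (P q d ⊗ₜ[k] e k n (-d))
          = if c = d then P q c ⊗ₜ[k] e k n (c + -d) else 0 := by
      intro c d
      rw [Algebra.TensorProduct.tmul_mul_tmul, P_mul_P hn hq hprim c d, e_mul,
        TensorProduct.ite_tmul]
    simp only [key]
    simp only [Finset.sum_ite_eq, Finset.mem_univ, if_true, add_neg_cancel, e_zero]
    rw [← TensorProduct.sum_tmul, sum_P hn hq hprim, Algebra.TensorProduct.one_def]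
  refine ⟨hinv, ?_, ?_, ?_, ?_⟩
  · rw [mul_comm]; exact hinv
  · have hL : ((Algebra.TensorProduct.assoc k k k (A k n) (A k n) (A k n)).toAlgHom.comp
        (Algebra.TensorProduct.map (comulA k n) (AlgHom.id k (A k n)))) (Rq k n q)
        = ∑ c : ZMod n, e k n c ⊗ₜ[k] (e k n c ⊗ₜ[k] P q c) := by
      rw [AlgHom.comp_apply, Rq_eq₂ hq, map_sum, map_sum]
      refine Finset.sum_congr rfl fun c _ => ?_
      rw [Algebra.TensorProduct.map_tmul, comulA_e, AlgHom.coe_id, id_eq]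
      simp [Algebra.TensorProduct.assoc_tmul]
    have h13 : R13 k n q = ∑ c : ZMod n, e k n c ⊗ₜ[k] ((1 : A k n) ⊗ₜ[k] P q c) := by
      rw [R13, Rq_eq₂ hq, map_sum]
      refine Finset.sum_congr rfl fun c _ => ?_
      rw [Algebra.TensorProduct.map_tmul, AlgHom.coe_id, id_eq,
        Algebra.TensorProduct.includeRight_apply]
    have h23 : R23 k n q = ∑ d : ZMod n, (1 : A k n) ⊗ₜ[k] (e k n d ⊗ₜ[k] P q d) := by
      rw [R23, Rq_eq₂ hq, TensorProduct.tmul_sum]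
    have hmul := Finset.sum_mul_sum (R := A k n ⊗[k] (A k n ⊗[k] A k n))
      Finset.univ Finset.univ
      (fun c : ZMod n => e k n c ⊗ₜ[k] ((1 : A k n) ⊗ₜ[k] P q c))
      (fun d : ZMod n => (1 : A k n) ⊗ₜ[k] (e k n d ⊗ₜ[k] P q d))
    rw [hL, h13, h23, hmul]
    have key : ∀ c d : ZMod n,
        (e k n c ⊗ₜ[k] ((1 : A k n) ⊗ₜ[k] P q c)) * ((1 : A k n) ⊗ₜ[k] (e k n d ⊗ₜ[k] P q d))
          = if c = d then e k n c ⊗ₜ[k] (e k n d ⊗ₜ[k] P q c) else 0 := by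
      intro c d
      rw [Algebra.TensorProduct.tmul_mul_tmul, Algebra.TensorProduct.tmul_mul_tmul,
        mul_one, one_mul, P_mul_P hn hq hprim c d, TensorProduct.tmul_ite,
        TensorProduct.tmul_ite]
    simp only [key]
    simp only [Finset.sum_ite_eq, Finset.mem_univ, if_true]
  · have hL : (Algebra.TensorProduct.map (AlgHom.id k (A k n)) (comulA k n)) (Rq k n q)
        = ∑ c : ZMod n, P q c ⊗ₜ[k] (e k n c ⊗ₜ[k] e k n c) := by
      rw [Rq_eq hq, map_sum]
      refine Finset.sum_congr rfl fun c _ => ?_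
      rw [Algebra.TensorProduct.map_tmul, comulA_e, AlgHom.coe_id, id_eq]
    have h13 : R13 k n q = ∑ c : ZMod n, P q c ⊗ₜ[k] ((1 : A k n) ⊗ₜ[k] e k n c) := by
      rw [R13, Rq_eq hq, map_sum]
      refine Finset.sum_congr rfl fun c _ => ?_
      rw [Algebra.TensorProduct.map_tmul, AlgHom.coe_id, id_eq,
        Algebra.TensorProduct.includeRight_apply]
    have h12 : R12 k n q = ∑ d : ZMod n, P q d ⊗ₜ[k] (e k n d ⊗ₜ[k] (1 : A k n)) := by
      rw [R12, Rq_eq hq, map_sum]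
      refine Finset.sum_congr rfl fun d _ => ?_
      rw [Algebra.TensorProduct.map_tmul, AlgHom.coe_id, id_eq,
        Algebra.TensorProduct.includeLeft_apply]
    have hmul := Finset.sum_mul_sum (R := A k n ⊗[k] (A k n ⊗[k] A k n))
      Finset.univ Finset.univ
      (fun c : ZMod n => P q c ⊗ₜ[k] ((1 : A k n) ⊗ₜ[k] e k n c))
      (fun d : ZMod n => P q d ⊗ₜ[k] (e k n d ⊗ₜ[k] (1 : A k n)))
    rw [hL, h13, h12, hmul]
    have key : ∀ c d : ZMod n,
        (P q c ⊗ₜ[k] ((1 : A k n) ⊗ₜ[k] e k n c)) * (P q d ⊗ₜ[k] (e k n d ⊗ₜ[k] (1 : A k n)))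
          = if c = d then P q c ⊗ₜ[k] (e k n d ⊗ₜ[k] e k n c) else 0 := by
      intro c d
      rw [Algebra.TensorProduct.tmul_mul_tmul, Algebra.TensorProduct.tmul_mul_tmul,
        mul_one, one_mul, P_mul_P hn hq hprim c d, TensorProduct.ite_tmul]
    simp only [key]
    simp only [Finset.sum_ite_eq, Finset.mem_univ, if_true]
  · intro x
    have hco : (Algebra.TensorProduct.comm k (A k n) (A k n)).toAlgHom.comp (comulA k n)
        = comulA k n := by
      apply MonoidAlgebra.algHom_ext
      intro y
      simp [comulA, MonoidAlgebra.lift_of, Algebra.TensorProduct.comm_tmul]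
      exact Subsingleton.elim _ _
    have h2 := DFunLike.congr_fun hco x
    simp only [AlgHom.coe_comp, Function.comp_apply, AlgEquiv.toAlgHom_eq_coe,
      AlgHom.coe_coe] at h2
    have h3 : (Algebra.TensorProduct.comm k (A k n) (A k n)) (comulA k n x) = comulA k n x := h2
    rw [h3, mul_comm]


end AnyonGen
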